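/- arXiv:1310.0299 — 5 statements merged into one kernel-verified Lean document; each statement's English description precedes it below -/
import Mathlib

section
/- Let m₁, …, m_n be integers and let s_k, t_k be defined by the recursions s₀ = 1, s₁ = m₁, s_k = m_k s_{k−1} + s_{k−2}, t₀ = 0, t₁ = 1, t_k = m_k t_{k−1} + t_{k−2}. In SL(2,ℤ) set A = [[0,−1],[1,0]] and B_c = [[1,0],[−c,1]] for an integer c, and define matrices M_j recursively by M₀ = A and M_j = A · B_{(−1)^{j+1} m_j} · M_{j−1} for 1 ≤ j ≤ n (so M_n is the matrix associated to the composite transform Φ ∘ L^{(−1)^{n+1}m_n} ∘ Φ ∘ ⋯ ∘ L^{−m₂} ∘ Φ ∘ L^{m₁} ∘ Φ). Then M_n = (−1)^{n(n+1)/2} · [[(−1)^{n+1} t_n, (−1)^{n+1} s_n], [t_{n−1}, s_{n−1}]]. -/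
/-- The numerator sequence: `s₀ = 1`, `s₁ = m₁`, `s_k = m_k s_{k-1} + s_{k-2}`. -/
def sSeq (m : ℕ → ℤ) : ℕ → ℤ
  | 0 => 1
  | 1 => m 1
  | (k + 2) => m (k + 2) * sSeq m (k + 1) + sSeq m k

/-- The denominator sequence: `t₀ = 0`, `t₁ = 1`, `t_k = m_k t_{k-1} + t_{k-2}`. -/
def tSeq (m : ℕ → ℤ) : ℕ → ℤ
  | 0 => 0
  | 1 => 1
  | (k + 2) => m (k + 2) * tSeq m (k + 1) + tSeq m k

/-- The matrix `A = [[0,-1],[1,0]]` corresponding to the Poincaré Fourier-Mukai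
transform `Φ`. -/
def Pmat : Matrix (Fin 2) (Fin 2) ℤ := !![0, -1; 1, 0]

/-- The matrix `B_c = [[1,0],[-c,1]]` corresponding to tensoring by `L^c`. -/
def Bmat (c : ℤ) : Matrix (Fin 2) (Fin 2) ℤ := !![1, 0; -c, 1]

/-- The matrix of the composite transform
`Φ ∘ L^{(-1)^{n+1} m_n} ∘ Φ ∘ ⋯ ∘ L^{-m₂} ∘ Φ ∘ L^{m₁} ∘ Φ`:
`M₀ = A` and `M_j = A · B_{(-1)^{j+1} m_j} · M_{j-1}`. -/
def Mmat (m : ℕ → ℤ) : ℕ → Matrix (Fin 2) (Fin 2) ℤ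
  | 0 => Pmat
  | (j + 1) => Pmat * Bmat ((-1) ^ (j + 2) * m (j + 1)) * Mmat m j

lemma sign_step (n : ℕ) :
    ((-1 : ℤ) ^ ((n + 1) * (n + 2) / 2)) = (-1 : ℤ) ^ (n * (n + 1) / 2) * (-1) ^ (n + 1) := by
  obtain ⟨k, hk⟩ := Nat.even_mul_succ_self n
  have h1 : n * (n + 1) = 2 * k := by omega
  have h2 : (n + 1) * (n + 2) = 2 * (k + (n + 1)) := by
    have : (n + 1) * (n + 2) = n * (n + 1) + 2 * (n + 1) := by ring
    omega
  rw [h1, h2, Nat.mul_div_cancel_left _ (by norm_num), Nat.mul_div_cancel_left _ (by norm_num),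
    pow_add]

/-- For every `n ≥ 1`,
`M_n = (-1)^{n(n+1)/2} [[(-1)^{n+1} t_n, (-1)^{n+1} s_n], [t_{n-1}, s_{n-1}]]`. -/
theorem isometric_automorphism_of_composite (m : ℕ → ℤ) (n : ℕ) (hn : 1 ≤ n) :
    Mmat m n = ((-1 : ℤ) ^ (n * (n + 1) / 2)) •
      !![(-1 : ℤ) ^ (n + 1) * tSeq m n, (-1 : ℤ) ^ (n + 1) * sSeq m n;
         tSeq m (n - 1), sSeq m (n - 1)] := by
  induction n, hn using Nat.le_induction with
  | base =>
    show Pmat * Bmat ((-1) ^ (0 + 2) * m 1) * Mmat m 0 = _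
    simp [Pmat, Bmat, Mmat, sSeq, tSeq]
  | succ n hn ih =>
    show Pmat * Bmat ((-1) ^ (n + 2) * m (n + 1)) * Mmat m n = _
    rw [ih, sign_step]
    obtain ⟨k, rfl⟩ : ∃ k, n = k + 1 := ⟨n - 1, by omega⟩
    have hs : sSeq m (k + 2) = m (k + 2) * sSeq m (k + 1) + sSeq m k := rfl
    have ht : tSeq m (k + 2) = m (k + 2) * tSeq m (k + 1) + tSeq m k := rfl
    simp only [Nat.add_sub_cancel, hs, ht, Pmat, Bmat]
    have hk2 : ((-1 : ℤ)) ^ (k * 2) = 1 := by rw [mul_comm, pow_mul]; norm_num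
    ext i j
    fin_cases i <;> fin_cases j <;>
      simp [Matrix.mul_apply, Fin.sum_univ_succ, pow_succ] <;> ring_nf <;> simp [hk2]
end

section
/- Let g ≥ 2 be an integer, let x, y, z, w be real numbers with xw − yz = 1, and let u be a complex number with x − yu ≠ 0. Set v = (−z + wu)/(x − yu). Then for every 1 ≤ m ≤ g+1, Σ_{n=1}^{g+1} a^{(g)}_{m,n}(x,y,z,w) · u^{n−1} = (x − yu)^g · v^{m−1}. In vector form: the complexified matrix (a^{(g)}_{m,n}) applied to the column vector (1, u, u², …, u^g) equals (x − yu)^g times the column vector (1, v, v², …, v^g). (This is the identity Φ_E^H(e^{uℓ}) = (x − yu)^g e^{(−z+wu)ℓ/(x−yu)} for the induced cohomological Fourier–Mukai transform.) -/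
/-- The entry `a^{(g)}_{m,n}(x,y,z,w)` of the matrix of `ρ^(g)` with respect to the
basis `Ω = {(-1)^r (g choose r) u₁^{g-r} u₂^r}`, written with zero-based indices
`i = m - 1`, `j = n - 1` and summation variable `l = λ - 1`. -/
def aEnt (R : Type*) [CommRing R] (k : ℕ) (x y z w : R) (i j : ℕ) : R :=
  (-1 : R) ^ (i + j) * ∑ l ∈ Finset.range (k + 1),
    if l ≤ j then
      ((k - i).choose l : R) * (i.choose (j - l) : R) *
        x ^ (k - i - l) * y ^ l * z ^ (i + l - j) * w ^ (j - l)
    else 0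

open Finset in
lemma aEnt_key (g i : ℕ) (hi : i ≤ g) (X Y Z W U : ℂ) :
    ∑ j ∈ range (g+1), aEnt ℂ g X Y Z W i j * U ^ j
      = (X - Y*U) ^ (g-i) * (-Z + W*U) ^ i := by
  -- the nonvanishing summand, parametrized by (l, j)
  set F : ℕ → ℕ → ℂ := fun l j =>
    if l ≤ j then
      (-1 : ℂ) ^ (i + j) * ((g - i).choose l : ℂ) * (i.choose (j - l) : ℂ) *
        X ^ (g - i - l) * Y ^ l * Z ^ (i + l - j) * W ^ (j - l) * U ^ j
    else 0 with hF
  have hLHS : ∑ j ∈ range (g+1), aEnt ℂ g X Y Z W i j * U ^ j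
      = ∑ j ∈ range (g+1), ∑ l ∈ range (g+1), F l j := by
    refine Finset.sum_congr rfl fun j _ => ?_
    rw [aEnt, mul_assoc, Finset.sum_mul, Finset.mul_sum]
    refine Finset.sum_congr rfl fun l _ => ?_
    simp only [hF]
    split_ifs with h
    · ring
    · simp
  rw [hLHS, Finset.sum_comm]
  -- restrict the outer sum to l ≤ g - i
  have hsub : range (g - i + 1) ⊆ range (g + 1) := by
    apply Finset.range_subset_range.mpr; omega
  rw [← Finset.sum_subset hsub (fun l _ hl => ?_)]
  swap
  · -- l > g - i : all terms vanish
    have hl' : g - i < l := by simpa using hl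
    refine Finset.sum_eq_zero fun j _ => ?_
    simp only [hF]
    split_ifs with h
    · rw [Nat.choose_eq_zero_of_lt hl']
      push_cast; ring
    · rfl
  -- for each l ≤ g - i, reindex the inner sum by t = j - l
  have hinner : ∀ l ∈ range (g - i + 1),
      ∑ j ∈ range (g + 1), F l j = ∑ t ∈ range (i + 1), F l (l + t) := by
    intro l hl
    have hl' : l ≤ g - i := by simpa using Nat.lt_succ_iff.mp (Finset.mem_range.mp hl)
    have h1 : range (l + i + 1) ⊆ range (g + 1) := by
      apply Finset.range_subset_range.mpr; omega
    rw [← Finset.sum_subset h1 (fun j hj hj' => ?_)]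
    swap
    · -- j > l + i : choose i (j - l) = 0
      have hj1 : j < g + 1 := Finset.mem_range.mp hj
      have hj2 : l + i < j := by
        have := Finset.mem_range.not.mp hj'
        omega
      simp only [hF]
      split_ifs with h
      · rw [Nat.choose_eq_zero_of_lt (by omega : i < j - l)]
        push_cast; ring
      · rfl
    rw [Finset.range_eq_Ico, ← Finset.sum_Ico_consecutive _ (Nat.zero_le l)
      (by omega : l ≤ l + i + 1)]
    have hzero : ∑ j ∈ Finset.Ico 0 l, F l j = 0 := by
      refine Finset.sum_eq_zero fun j hj => ?_
      have : j < l := (Finset.mem_Ico.mp hj).2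
      simp only [hF]
      rw [if_neg (by omega)]
    rw [hzero, zero_add, Finset.sum_Ico_eq_sum_range,
      show l + i + 1 - l = i + 1 by omega]
  rw [Finset.sum_congr rfl hinner]
  -- now expand the right-hand side
  have h1 : (X - Y*U) ^ (g-i)
      = ∑ l ∈ range (g-i+1), (-1:ℂ)^l * ((g-i).choose l : ℂ) * X^(g-i-l) * Y^l * U^l := by
    rw [show X - Y*U = -(Y*U) + X by ring, add_pow]
    refine Finset.sum_congr rfl fun l _ => ?_
    rw [neg_pow, mul_pow]
    ring
  have h2 : (-Z + W*U) ^ i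
      = ∑ t ∈ range (i+1), (-1:ℂ)^(i+t) * (i.choose t : ℂ) * Z^(i-t) * W^t * U^t := by
    rw [show -Z + W*U = W*U + -Z by ring, add_pow]
    refine Finset.sum_congr rfl fun t ht => ?_
    have ht' : t ≤ i := Nat.lt_succ_iff.mp (Finset.mem_range.mp ht)
    rw [neg_pow, mul_pow]
    rw [show i + t = (i - t) + 2*t by omega, pow_add, pow_mul]
    simp only [neg_one_sq, one_pow, mul_one]
    ring
  rw [h1, h2, Finset.sum_mul_sum]
  refine Finset.sum_congr rfl fun l hl => Finset.sum_congr rfl fun t ht => ?_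
  have hl' : l ≤ g - i := Nat.lt_succ_iff.mp (Finset.mem_range.mp hl)
  have ht' : t ≤ i := Nat.lt_succ_iff.mp (Finset.mem_range.mp ht)
  simp only [hF]
  rw [if_pos (by omega : l ≤ l + t)]
  rw [show l + t - l = t by omega, show i + l - (l + t) = i - t by omega,
    show i + (l + t) = l + (i + t) by omega, pow_add, pow_add]
  ring

/-- For `g ≥ 2`, real `x, y, z, w` with `xw - yz = 1` and `u ∈ ℂ` with
`x - yu ≠ 0`, setting `v = (-z + wu)/(x - yu)`, for every row `m = i + 1`:
`Σ_{n=1}^{g+1} a^{(g)}_{m,n}(x,y,z,w) u^{n-1} = (x - yu)^g v^{m-1}`;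
i.e. `Φ_E^H (e^{uℓ}) = (x - yu)^g e^{(-z+wu)ℓ/(x-yu)}`. -/
theorem cohomological_FMT_on_exponentials (g : ℕ) (hg : 2 ≤ g)
    (x y z w : ℝ) (hdet : x * w - y * z = 1) (u : ℂ)
    (hu : (x : ℂ) - (y : ℂ) * u ≠ 0) :
    ∀ i : Fin (g + 1),
      ∑ j ∈ Finset.range (g + 1),
          aEnt ℂ g (x : ℂ) (y : ℂ) (z : ℂ) (w : ℂ) (i : ℕ) j * u ^ j
        = ((x : ℂ) - (y : ℂ) * u) ^ g *
            ((-(z : ℂ) + (w : ℂ) * u) / ((x : ℂ) - (y : ℂ) * u)) ^ (i : ℕ) := by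
  intro i
  have hi : (i : ℕ) ≤ g := Nat.lt_succ_iff.mp i.isLt
  rw [aEnt_key g i hi, div_pow,
    show ((x:ℂ) - y*u)^g = ((x:ℂ) - y*u)^(g - (i:ℕ)) * ((x:ℂ) - y*u)^(i:ℕ) by
      rw [← pow_add, Nat.sub_add_cancel hi]]
  field_simp
end

section
/- Let g ≥ 2 be an integer and let x, y, z, w be real numbers with xw − yz = 1. Define the bilinear pairing on ℝ^{g+1} (coordinates indexed 0,…,g) by ⟨v, w⟩ = Σ_{i=0}^{g} (−1)^i (g choose i) v_i w_{g−i}. Then the matrix A = (a^{(g)}_{m,n}(x,y,z,w)) is an isometry for this pairing: ⟨A v, A w⟩ = ⟨v, w⟩ for all v, w ∈ ℝ^{g+1}. (This is the statement that the induced cohomological Fourier–Mukai transform preserves the Mukai pairing, in rank-one coordinates.) -/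
set_option synthInstance.maxHeartbeats 1000000
set_option maxHeartbeats 1000000


/-- The `(g+1) × (g+1)` real matrix `A(x,y,z,w) = (a^{(g)}_{m,n}(x,y,z,w))`. -/
def Amat (g : ℕ) (x y z w : ℝ) : Matrix (Fin (g + 1)) (Fin (g + 1)) ℝ :=
  Matrix.of fun m n => aEnt ℝ g x y z w (m : ℕ) (n : ℕ)

/-- The Mukai pairing in rank-one coordinates (indexed `0, …, g`):
`⟨v, w⟩ = Σ_{i=0}^{g} (-1)^i (g choose i) v_i w_{g-i}`. -/
def mukaiPair (g : ℕ) (v w : Fin (g + 1) → ℝ) : ℝ :=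
  ∑ i : Fin (g + 1), (-1 : ℝ) ^ (i : ℕ) * (g.choose (i : ℕ) : ℝ) * v i * w i.rev


noncomputable section FMT
open MvPolynomial Finset

abbrev RR := MvPolynomial (Fin 2) ℝ

def sgm (x y z w : ℝ) : RR →ₐ[ℝ] RR :=
  aeval ![C x * X 0 + C z * X 1, C y * X 0 + C w * X 1]

@[simp] lemma sgm_X0 (x y z w : ℝ) : sgm x y z w (X 0) = C x * X 0 + C z * X 1 := by
  simp [sgm]

@[simp] lemma sgm_X1 (x y z w : ℝ) : sgm x y z w (X 1) = C y * X 0 + C w * X 1 := by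
  simp [sgm]

@[simp] lemma sgm_C (x y z w a : ℝ) : sgm x y z w (C a) = C a := by
  simp [sgm, algebraMap_eq]

lemma pderiv_comm' (i j : Fin 2) (p : RR) :
    pderiv i (pderiv j p) = pderiv j (pderiv i p) := by
  induction p using MvPolynomial.induction_on with
  | C a => simp
  | add p q hp hq => simp [hp, hq]
  | mul_X p k hp =>
      simp only [pderiv_mul, hp, pderiv_X, Pi.single_apply, map_add]
      split_ifs <;> simp <;> ring

lemma pd0_sgm (x y z w : ℝ) (p : RR) :
    pderiv 0 (sgm x y z w p)
      = C x * sgm x y z w (pderiv 0 p) + C y * sgm x y z w (pderiv 1 p) := by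
  induction p using MvPolynomial.induction_on with
  | C a => simp
  | add p q hp hq => simp only [map_add, hp, hq]; ring
  | mul_X p k hp =>
      fin_cases k <;>
      · simp only [map_mul, pderiv_mul, hp, sgm_X0, sgm_X1, pderiv_X, map_add]
        simp [pderiv_X, Pi.single_apply]
        ring

lemma pd1_sgm (x y z w : ℝ) (p : RR) :
    pderiv 1 (sgm x y z w p)
      = C z * sgm x y z w (pderiv 0 p) + C w * sgm x y z w (pderiv 1 p) := by
  induction p using MvPolynomial.induction_on with
  | C a => simp
  | add p q hp hq => simp only [map_add, hp, hq]; ring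
  | mul_X p k hp =>
      fin_cases k <;>
      · simp only [map_mul, pderiv_mul, hp, sgm_X0, sgm_X1, pderiv_X, map_add]
        simp [pderiv_X, Pi.single_apply]
        ring

def D0 : Module.End ℝ RR := (pderiv 0 : Derivation ℝ RR RR).toLinearMap
def D1 : Module.End ℝ RR := (pderiv 1 : Derivation ℝ RR RR).toLinearMap

@[simp] lemma D0_apply (p : RR) : D0 p = pderiv 0 p := rfl
@[simp] lemma D1_apply (p : RR) : D1 p = pderiv 1 p := rfl

lemma key01 : D0 * D1 = D1 * D0 := LinearMap.ext fun p => pderiv_comm' 0 1 p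

lemma hcomm : ∀ a ∈ ({D0, D1} : Set (Module.End ℝ RR)),
    ∀ b ∈ ({D0, D1} : Set (Module.End ℝ RR)), a * b = b * a := by
  rintro a (rfl | rfl) b (rfl | rfl) <;> first | rfl | exact key01 | exact key01.symm

instance : CommRing (Algebra.adjoin ℝ ({D0, D1} : Set (Module.End ℝ RR))) :=
  Algebra.adjoinCommRingOfComm ℝ hcomm

def E0 : Algebra.adjoin ℝ ({D0, D1} : Set (Module.End ℝ RR)) :=
  ⟨D0, Algebra.subset_adjoin (by simp)⟩
def E1 : Algebra.adjoin ℝ ({D0, D1} : Set (Module.End ℝ RR)) :=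
  ⟨D1, Algebra.subset_adjoin (by simp)⟩

def Phi : RR →ₐ[ℝ] Algebra.adjoin ℝ ({D0, D1} : Set (Module.End ℝ RR)) :=
  aeval ![E1, -E0]

@[simp] lemma Phi_X0 : Phi (X 0) = E1 := by simp [Phi]
@[simp] lemma Phi_X1 : Phi (X 1) = -E0 := by simp [Phi]
@[simp] lemma Phi_C (a : ℝ) : Phi (C a) = algebraMap ℝ _ a := by simp [Phi]

def aeval0 : RR →ₐ[ℝ] ℝ := aeval (fun _ => (0 : ℝ))

def apol (f h : RR) : ℝ :=
  aeval0 (((Phi f : Algebra.adjoin ℝ _) : Module.End ℝ RR) h)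

section FMT2
variable {x y z w : ℝ}

lemma coe_E0 : ((E0 : Algebra.adjoin ℝ ({D0, D1} : Set (Module.End ℝ RR))) :
    Module.End ℝ RR) = D0 := rfl
lemma coe_E1 : ((E1 : Algebra.adjoin ℝ ({D0, D1} : Set (Module.End ℝ RR))) :
    Module.End ℝ RR) = D1 := rfl

lemma coe_sub' (a b : Algebra.adjoin ℝ ({D0, D1} : Set (Module.End ℝ RR))) :
    ((a - b : Algebra.adjoin ℝ _) : Module.End ℝ RR) = (a : Module.End ℝ RR) - b := rfl
lemma coe_smul' (r : ℝ) (a : Algebra.adjoin ℝ ({D0, D1} : Set (Module.End ℝ RR))) :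
    ((r • a : Algebra.adjoin ℝ _) : Module.End ℝ RR) = r • (a : Module.End ℝ RR) := rfl
lemma coe_neg' (a : Algebra.adjoin ℝ ({D0, D1} : Set (Module.End ℝ RR))) :
    ((-a : Algebra.adjoin ℝ _) : Module.End ℝ RR) = -(a : Module.End ℝ RR) := rfl
lemma coe_add' (a b : Algebra.adjoin ℝ ({D0, D1} : Set (Module.End ℝ RR))) :
    ((a + b : Algebra.adjoin ℝ _) : Module.End ℝ RR) = (a : Module.End ℝ RR) + b := rfl
lemma coe_mul' (a b : Algebra.adjoin ℝ ({D0, D1} : Set (Module.End ℝ RR))) :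
    ((a * b : Algebra.adjoin ℝ _) : Module.End ℝ RR) = (a : Module.End ℝ RR) * b := rfl

set_option synthInstance.maxHeartbeats 1000000 in
lemma Phi_sgm_X0 (hdet : x * w - y * z = 1) (h : RR) :
    ((Phi (sgm x y z w (X 0)) : Algebra.adjoin ℝ _) : Module.End ℝ RR) (sgm x y z w h)
      = sgm x y z w (((Phi (X 0) : Algebra.adjoin ℝ _) : Module.End ℝ RR) h) := by
  have hC : (C x * C w - C y * C z : RR) = 1 := by
    rw [← map_mul, ← map_mul, ← map_sub, hdet, map_one]
  have h1 : Phi (sgm x y z w (X 0)) = x • E1 - z • E0 := by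
    simp [sgm, Algebra.smul_def, sub_eq_add_neg, mul_comm]
  rw [h1, coe_sub', coe_smul', coe_smul', coe_E0, coe_E1]
  simp only [Phi_X0, coe_E1, LinearMap.sub_apply, LinearMap.smul_apply, D0_apply, D1_apply]
  rw [pd0_sgm, pd1_sgm]
  rw [smul_eq_C_mul, smul_eq_C_mul]
  linear_combination (sgm x y z w ((pderiv 1) h)) * hC

set_option synthInstance.maxHeartbeats 1000000 in
lemma Phi_sgm_X1 (hdet : x * w - y * z = 1) (h : RR) :
    ((Phi (sgm x y z w (X 1)) : Algebra.adjoin ℝ _) : Module.End ℝ RR) (sgm x y z w h)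
      = sgm x y z w (((Phi (X 1) : Algebra.adjoin ℝ _) : Module.End ℝ RR) h) := by
  have hC : (C x * C w - C y * C z : RR) = 1 := by
    rw [← map_mul, ← map_mul, ← map_sub, hdet, map_one]
  have h1 : Phi (sgm x y z w (X 1)) = y • E1 - w • E0 := by
    simp [sgm, Algebra.smul_def, sub_eq_add_neg, mul_comm]
  rw [h1, coe_sub', coe_smul', coe_smul', coe_E0, coe_E1]
  simp only [Phi_X1, coe_neg', coe_E0, LinearMap.sub_apply, LinearMap.smul_apply,
    LinearMap.neg_apply, D0_apply, D1_apply]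
  rw [pd0_sgm, pd1_sgm]
  rw [smul_eq_C_mul, smul_eq_C_mul, map_neg]
  linear_combination (- sgm x y z w ((pderiv 0) h)) * hC

lemma Phi_sgm_X (hdet : x * w - y * z = 1) (k : Fin 2) (h : RR) :
    ((Phi (sgm x y z w (X k)) : Algebra.adjoin ℝ _) : Module.End ℝ RR) (sgm x y z w h)
      = sgm x y z w (((Phi (X k) : Algebra.adjoin ℝ _) : Module.End ℝ RR) h) := by
  fin_cases k
  · exact Phi_sgm_X0 hdet h
  · exact Phi_sgm_X1 hdet h

lemma Phi_sgm (hdet : x * w - y * z = 1) (f : RR) : ∀ h : RR,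
    ((Phi (sgm x y z w f) : Algebra.adjoin ℝ _) : Module.End ℝ RR) (sgm x y z w h)
      = sgm x y z w (((Phi f : Algebra.adjoin ℝ _) : Module.End ℝ RR) h) := by
  induction f using MvPolynomial.induction_on with
  | C a =>
      intro h
      simp [Algebra.algebraMap_eq_smul_one]
  | add p q hp hq =>
      intro h
      simp only [map_add, coe_add', LinearMap.add_apply, hp, hq, map_add]
  | mul_X p k hp =>
      intro h
      simp only [map_mul, coe_mul', Module.End.mul_apply]
      rw [Phi_sgm_X hdet, hp]

lemma aeval0_sgm (p : RR) : aeval0 (sgm x y z w p) = aeval0 p := by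
  have : (aeval0.comp (sgm x y z w) : RR →ₐ[ℝ] ℝ) = aeval0 := by
    rw [sgm, aeval0, comp_aeval]
    congr 1
    funext i
    fin_cases i <;> simp

  exact AlgHom.congr_fun this p

lemma apol_sgm (hdet : x * w - y * z = 1) (f h : RR) :
    apol (sgm x y z w f) (sgm x y z w h) = apol f h := by
  rw [apol, Phi_sgm hdet, aeval0_sgm, apol]

end FMT2

section FMT3

lemma pow_pderiv_mul (i : Fin 2) (q : RR) (hq : pderiv i q = 0) (n : ℕ) : ∀ c : ℕ,
    (((pderiv i : Derivation ℝ RR RR).toLinearMap ^ n) : Module.End ℝ RR) (X i ^ c * q)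
      = (c.descFactorial n : ℝ) • (X i ^ (c - n) * q) := by
  induction n with
  | zero => intro c; simp
  | succ n ih =>
      intro c
      rw [pow_succ, Module.End.mul_apply]
      cases c with
      | zero =>
          have : (pderiv i : Derivation ℝ RR RR).toLinearMap (X i ^ 0 * q) = 0 := by
            simp [hq]
          rw [this, map_zero]
          simp
      | succ c =>
          have hd : (pderiv i : Derivation ℝ RR RR).toLinearMap (X i ^ (c+1) * q)
              = ((c+1 : ℕ) : ℝ) • (X i ^ c * q) := by
            show pderiv i (X i ^ (c+1) * q) = _
            rw [pderiv_mul, hq, mul_zero, add_zero, pderiv_pow, pderiv_X_self]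
            rw [smul_eq_C_mul, ← MvPolynomial.C_eq_coe_nat]
            push_cast
            ring
          rw [hd, map_smul, ih c, smul_smul, Nat.succ_descFactorial_succ,
            Nat.succ_sub_succ]
          push_cast
          ring_nf

@[simp] lemma aeval0_X (i : Fin 2) : aeval0 (X i) = 0 := by simp [aeval0]
@[simp] lemma aeval0_C (r : ℝ) : aeval0 (C r) = r := by simp [aeval0]

lemma apol_mono (a b : ℝ) (c d c' d' : ℕ) :
    apol (C a * X 0 ^ c * X 1 ^ d) (C b * X 0 ^ c' * X 1 ^ d')
      = a * b * (-1 : ℝ) ^ d *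
          (if d = c' ∧ c = d' then (c'.factorial * d'.factorial : ℝ) else 0) := by
  have hPhi : Phi (C a * X 0 ^ c * X 1 ^ d)
      = algebraMap ℝ _ a * (E1 ^ c * (-E0) ^ d) := by
    rw [map_mul, map_mul, map_pow, map_pow, Phi_C, Phi_X0, Phi_X1, mul_assoc]
  have hco : ((algebraMap ℝ _ a * (E1 ^ c * (-E0) ^ d) :
        Algebra.adjoin ℝ ({D0, D1} : Set (Module.End ℝ RR))) : Module.End ℝ RR)
      = algebraMap ℝ (Module.End ℝ RR) a * (D1 ^ c * (-D0) ^ d) := rfl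
  rw [apol, hPhi, hco, Module.End.mul_apply, Module.End.mul_apply]
  have hneg : ((-D0) ^ d : Module.End ℝ RR) = ((-1 : ℝ) ^ d) • D0 ^ d := by
    rw [show (-D0 : Module.End ℝ RR) = (-1 : ℝ) • D0 from (neg_one_smul ℝ D0).symm, smul_pow]
  rw [hneg, LinearMap.smul_apply, Module.algebraMap_end_apply]
  -- compute D0 ^ d applied
  have hq0 : pderiv (0 : Fin 2) (C b * X 1 ^ d') = 0 := by
    rw [pderiv_C_mul, pderiv_pow, pderiv_X_of_ne (by decide), mul_zero, mul_zero]
  have h0 : ((D0 ^ d) : Module.End ℝ RR) (C b * X 0 ^ c' * X 1 ^ d')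
      = (c'.descFactorial d : ℝ) • (X 0 ^ (c' - d) * (C b * X 1 ^ d')) := by
    have : (C b * X 0 ^ c' * X 1 ^ d' : RR) = X 0 ^ c' * (C b * X 1 ^ d') := by ring
    rw [this]
    exact pow_pderiv_mul 0 (C b * X 1 ^ d') hq0 d c'
  simp only [map_smul]
  rw [h0]
  simp only [map_smul]
  have hq1 : pderiv (1 : Fin 2) (C b * X 0 ^ (c' - d)) = 0 := by
    rw [pderiv_C_mul, pderiv_pow, pderiv_X_of_ne (by decide), mul_zero, mul_zero]
  have h1 : ((D1 ^ c) : Module.End ℝ RR) (X 0 ^ (c' - d) * (C b * X 1 ^ d'))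
      = (d'.descFactorial c : ℝ) • (X 1 ^ (d' - c) * (C b * X 0 ^ (c' - d))) := by
    have : (X 0 ^ (c' - d) * (C b * X 1 ^ d') : RR)
        = X 1 ^ d' * (C b * X 0 ^ (c' - d)) := by ring
    rw [this]
    exact pow_pderiv_mul 1 (C b * X 0 ^ (c' - d)) hq1 c d'
  rw [h1]
  simp only [map_smul, smul_eq_mul]
  have hev : aeval0 (X 1 ^ (d' - c) * (C b * X 0 ^ (c' - d)))
      = (if d' - c = 0 then 1 else 0) * (b * (if c' - d = 0 then 1 else 0)) := by
    rw [map_mul, map_mul, map_pow, map_pow, aeval0_X, aeval0_X, aeval0_C,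
      zero_pow_eq, zero_pow_eq]
  rw [hev]
  by_cases h : d = c' ∧ c = d'
  · obtain ⟨rfl, rfl⟩ := h
    simp [Nat.descFactorial_self, Nat.sub_self]
    ring
  · simp only [if_neg h]
    rcases Nat.lt_trichotomy d c' with hlt | heq | hgt
    · have : ¬ (c' - d = 0) := by omega
      simp [this]
    · rcases Nat.lt_trichotomy c d' with hlt2 | heq2 | hgt2
      · have : ¬ (d' - c = 0) := by omega
        simp [this]
      · exact absurd ⟨heq, heq2⟩ h
      · have : (d'.descFactorial c : ℝ) = 0 := by
          rw [Nat.descFactorial_eq_zero_iff_lt.2 hgt2]; simp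
        simp [this]
    · have : (c'.descFactorial d : ℝ) = 0 := by
        rw [Nat.descFactorial_eq_zero_iff_lt.2 hgt]; simp
      simp [this]

end FMT3


lemma key_choose (g j p q : ℕ) (hj : j ≤ g) (hq : q ≤ j) (hp : p ≤ g - j) :
    g.choose j * ((g - j).choose p * j.choose q)
      = g.choose (g - p - q) * ((g - (g - p - q)).choose q * (g - p - q).choose (j - q)) := by
  have hpq : p + q ≤ g := by omega
  have e1 : (g - j).choose p * p.factorial * (g - j - p).factorial = (g - j).factorial :=
    Nat.choose_mul_factorial_mul_factorial hp
  have e2 : j.choose q * q.factorial * (j - q).factorial = j.factorial :=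
    Nat.choose_mul_factorial_mul_factorial hq
  have e3 : g.choose j * j.factorial * (g - j).factorial = g.factorial :=
    Nat.choose_mul_factorial_mul_factorial hj
  set i := g - p - q with hi
  have hig : i ≤ g := by omega
  have hgi : g - i = p + q := by omega
  have hjq : j - q ≤ i := by omega
  have e4 : (p + q).choose q * q.factorial * p.factorial = (p + q).factorial := by
    have := Nat.choose_mul_factorial_mul_factorial (Nat.le_add_left q p)
    simpa using this
  have e5 : i.choose (j - q) * (j - q).factorial * (i - (j - q)).factorial = i.factorial :=
    Nat.choose_mul_factorial_mul_factorial hjq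
  have e6 : g.choose i * i.factorial * (g - i).factorial = g.factorial :=
    Nat.choose_mul_factorial_mul_factorial hig
  have hij : i - (j - q) = g - j - p := by omega
  rw [hij] at e5
  rw [hgi] at e6
  -- multiply both sides by the same positive factor
  have key : g.choose j * ((g - j).choose p * j.choose q) *
      (p.factorial * (q.factorial * ((g - j - p).factorial * (j - q).factorial)))
      = g.choose i * ((g - i).choose q * i.choose (j - q)) *
      (p.factorial * (q.factorial * ((g - j - p).factorial * (j - q).factorial))) := by
    calc g.choose j * ((g - j).choose p * j.choose q) *
        (p.factorial * (q.factorial * ((g - j - p).factorial * (j - q).factorial)))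
        = g.choose j * (((g - j).choose p * p.factorial * (g - j - p).factorial) *
            (j.choose q * q.factorial * (j - q).factorial)) := by ring
      _ = g.factorial := by rw [e1, e2, ← e3]; ring
      _ = g.choose i * i.factorial * (p + q).factorial := e6.symm
      _ = g.choose i * (((p + q).choose q * q.factorial * p.factorial) *
            (i.choose (j - q) * (j - q).factorial * (g - j - p).factorial)) := by
          rw [e4, e5]; ring
      _ = _ := by rw [hgi]; ring
  have hpos : 0 < p.factorial * (q.factorial * ((g - j - p).factorial * (j - q).factorial)) :=
    by positivity
  exact Nat.eq_of_mul_eq_mul_right hpos key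

def colL (g j : ℕ) (x y z w : ℝ) (p q : ℕ) : RR :=
  C ((-1:ℝ)^j * (g.choose j : ℝ) * ((g-j).choose p : ℝ) * (j.choose q : ℝ)
      * (x^p * z^(g-j-p) * y^q * w^(j-q))) * (X 0^(p+q) * X 1^((g-j-p)+(j-q)))

def colR (g j : ℕ) (x y z w : ℝ) (i l : ℕ) : RR :=
  C ((-1:ℝ)^(i+j) * (if l ≤ j then ((g-i).choose l : ℝ) * (i.choose (j-l) : ℝ)
        * x^(g-i-l) * y^l * z^(i+l-j) * w^(j-l) else 0)
      * (-1:ℝ)^i * (g.choose i : ℝ)) * (X 0^(g-i) * X 1^i)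

lemma col (g j : ℕ) (hj : j ≤ g) (x y z w : ℝ) :
    (C ((-1:ℝ)^j * (g.choose j : ℝ)) : RR) * (C x * X 0 + C z * X 1)^(g-j)
        * (C y * X 0 + C w * X 1)^j
      = ∑ i ∈ range (g+1), C (aEnt ℝ g x y z w i j * (-1:ℝ)^i * (g.choose i : ℝ))
          * (X 0^(g-i) * X 1^i) := by
  -- Step 1: expand the left side into a double sum
  have hL : (C ((-1:ℝ)^j * (g.choose j : ℝ)) : RR) * (C x * X 0 + C z * X 1)^(g-j)
        * (C y * X 0 + C w * X 1)^j
      = ∑ p ∈ range (g-j+1), ∑ q ∈ range (j+1), colL g j x y z w p q := by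
    rw [add_pow, add_pow, mul_assoc, Finset.sum_mul_sum, Finset.mul_sum]
    refine sum_congr rfl fun p hp => ?_
    rw [Finset.mul_sum]
    refine sum_congr rfl fun q hq => ?_
    simp only [colL, map_mul, map_pow, map_neg, map_one, ← MvPolynomial.C_eq_coe_nat]
    ring
  -- Step 2: extend the ranges
  have hLext : ∑ p ∈ range (g-j+1), ∑ q ∈ range (j+1), colL g j x y z w p q
      = ∑ p ∈ range (g+1), ∑ q ∈ range (g+1), colL g j x y z w p q := by
    have hinner : ∀ p, ∑ q ∈ range (j+1), colL g j x y z w p q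
        = ∑ q ∈ range (g+1), colL g j x y z w p q := fun p => by
      refine Finset.sum_subset (by apply range_subset_range.2; omega) fun q _ hq => ?_
      have : j.choose q = 0 := Nat.choose_eq_zero_of_lt (by simp only [mem_range] at hq; omega)
      simp [colL, this]
    rw [sum_congr rfl fun p _ => hinner p]
    refine Finset.sum_subset (by apply range_subset_range.2; omega) fun p _ hp => ?_
    refine Finset.sum_eq_zero fun q _ => ?_
    have : (g-j).choose p = 0 := Nat.choose_eq_zero_of_lt (by simp only [mem_range] at hp; omega)
    simp [colL, this]
  -- Step 3: expand the right side into a double sum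
  have hR : ∑ i ∈ range (g+1), C (aEnt ℝ g x y z w i j * (-1:ℝ)^i * (g.choose i : ℝ))
          * (X 0^(g-i) * X 1^i)
      = ∑ i ∈ range (g+1), ∑ l ∈ range (g+1), colR g j x y z w i l := by
    refine sum_congr rfl fun i _ => ?_
    rw [aEnt]
    rw [show ((-1:ℝ)^(i+j) * ∑ l ∈ Finset.range (g + 1),
          (if l ≤ j then ((g - i).choose l : ℝ) * (i.choose (j - l) : ℝ) *
            x ^ (g - i - l) * y ^ l * z ^ (i + l - j) * w ^ (j - l) else 0))
          * (-1:ℝ)^i * (g.choose i : ℝ)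
        = ∑ l ∈ Finset.range (g + 1), (-1:ℝ)^(i+j) *
          (if l ≤ j then ((g - i).choose l : ℝ) * (i.choose (j - l) : ℝ) *
            x ^ (g - i - l) * y ^ l * z ^ (i + l - j) * w ^ (j - l) else 0)
          * (-1:ℝ)^i * (g.choose i : ℝ) from by
      rw [Finset.mul_sum, Finset.sum_mul, Finset.sum_mul]]
    rw [map_sum, Finset.sum_mul]
    refine sum_congr rfl fun l _ => ?_
    simp only [colR]
  refine hL.trans (hLext.trans (Eq.trans ?_ hR.symm))
  -- Step 4: turn both into sums over the product square and compare via a bijection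
  rw [← Finset.sum_product', ← Finset.sum_product']
  have hLfil : ∑ pq ∈ (range (g+1) ×ˢ range (g+1)).filter (fun pq => pq.1 + pq.2 ≤ g),
        colL g j x y z w pq.1 pq.2
      = ∑ pq ∈ (range (g+1) ×ˢ range (g+1)), colL g j x y z w pq.1 pq.2 := by
    refine Finset.sum_filter_of_ne fun pq hpq hne => ?_
    by_contra hgt
    simp only [mem_product, mem_range] at hpq
    by_cases hp : pq.1 ≤ g - j
    · have : j.choose pq.2 = 0 := Nat.choose_eq_zero_of_lt (by omega)
      exact hne (by simp [colL, this])
    · have : (g-j).choose pq.1 = 0 := Nat.choose_eq_zero_of_lt (by omega)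
      exact hne (by simp [colL, this])
  have hRfil : ∑ il ∈ (range (g+1) ×ˢ range (g+1)).filter (fun il => il.1 + il.2 ≤ g),
        colR g j x y z w il.1 il.2
      = ∑ il ∈ (range (g+1) ×ˢ range (g+1)), colR g j x y z w il.1 il.2 := by
    refine Finset.sum_filter_of_ne fun il hil hne => ?_
    by_contra hgt
    simp only [mem_product, mem_range] at hil
    have : (g - il.1).choose il.2 = 0 := Nat.choose_eq_zero_of_lt (by omega)
    refine hne ?_
    by_cases hlj : il.2 ≤ j
    · simp [colR, this, hlj]
    · simp [colR, hlj]
  rw [← hLfil, ← hRfil]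
  refine Finset.sum_nbij' (fun pq => (g - pq.1 - pq.2, pq.2)) (fun il => (g - il.1 - il.2, il.2))
    ?_ ?_ ?_ ?_ ?_
  · intro pq hpq
    simp only [mem_filter, mem_product, mem_range] at hpq ⊢
    omega
  · intro il hil
    simp only [mem_filter, mem_product, mem_range] at hil ⊢
    omega
  · intro pq hpq
    simp only [mem_filter, mem_product, mem_range] at hpq
    ext <;> simp <;> omega
  · intro il hil
    simp only [mem_filter, mem_product, mem_range] at hil
    ext <;> simp <;> omega
  · intro pq hpq
    simp only [mem_filter, mem_product, mem_range] at hpq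
    obtain ⟨⟨hp, hq⟩, hpq2⟩ := hpq
    obtain ⟨p, q⟩ := pq
    simp only at hpq2 ⊢
    by_cases hqj : q ≤ j
    · by_cases hpj : p ≤ g - j
      · -- main case
        have hkc := key_choose g j p q hj hqj hpj
        have hkcR : ((g.choose j : ℝ)) * (((g - j).choose p : ℝ) * (j.choose q : ℝ))
            = (g.choose (g - p - q) : ℝ) * (((g - (g - p - q)).choose q : ℝ)
              * ((g - p - q).choose (j - q) : ℝ)) := by exact_mod_cast hkc
        have hgg : g - (g - p - q) = p + q := by omega
        rw [hgg] at hkcR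
        simp only [colL, colR, if_pos hqj]
        rw [show g - (g-p-q) - q = p from by omega,
          show (g-p-q) + q - j = g - j - p from by omega, hgg,
          show (g-j-p) + (j-q) = g - p - q from by omega]
        congr 2
        have heven : (-1:ℝ)^(g-p-q) * (-1:ℝ)^(g-p-q) = 1 := by
          rw [← pow_add, Even.neg_one_pow ⟨g-p-q, rfl⟩]
        linear_combination ((-1:ℝ)^j * (x^p * z^(g-j-p) * y^q * w^(j-q))) * hkcR
          - ((-1:ℝ)^j * ((g.choose (g-p-q) : ℝ) * (((p+q).choose q : ℝ)
              * ((g-p-q).choose (j-q) : ℝ))) * (x^p * z^(g-j-p) * y^q * w^(j-q))) * heven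
      · have h1 : (g-j).choose p = 0 := Nat.choose_eq_zero_of_lt (by omega)
        have h2 : (g-p-q).choose (j-q) = 0 := Nat.choose_eq_zero_of_lt (by omega)
        by_cases hlj : q ≤ j
        · simp [colL, colR, h1, h2, hlj]
        · simp [colL, colR, h1, hlj]
    · have h1 : j.choose q = 0 := Nat.choose_eq_zero_of_lt (by omega)
      simp [colL, colR, h1, hqj]

section FMT4

def omB (g r : ℕ) : RR := C ((-1:ℝ)^r * (g.choose r : ℝ)) * (X 0^(g-r) * X 1^r)

def Pv (g : ℕ) (v : Fin (g+1) → ℝ) : RR := ∑ r : Fin (g+1), C (v r) * omB g (r:ℕ)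

lemma apol_sum_left {ι : Type*} (s : Finset ι) (f : ι → RR) (h : RR) :
    apol (∑ i ∈ s, f i) h = ∑ i ∈ s, apol (f i) h := by
  simp only [apol]
  rw [map_sum Phi f s]
  rw [show ((∑ i ∈ s, Phi (f i) : Algebra.adjoin ℝ ({D0, D1} : Set (Module.End ℝ RR)))
        : Module.End ℝ RR) = ∑ i ∈ s, ((Phi (f i) : Algebra.adjoin ℝ _) : Module.End ℝ RR)
    from map_sum (Algebra.adjoin ℝ ({D0, D1} : Set (Module.End ℝ RR))).val _ s]
  rw [LinearMap.sum_apply, map_sum]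

lemma apol_sum_right {ι : Type*} (f : RR) (s : Finset ι) (h : ι → RR) :
    apol f (∑ i ∈ s, h i) = ∑ i ∈ s, apol f (h i) := by
  simp only [apol, map_sum]

lemma apol_omB (g : ℕ) (a b : ℝ) (r s : ℕ) (hr : r ≤ g) (hs : s ≤ g) :
    apol (C a * omB g r) (C b * omB g s)
      = a * ((-1:ℝ)^r * (g.choose r : ℝ)) * (b * ((-1:ℝ)^s * (g.choose s : ℝ)))
          * (-1:ℝ)^r * (if r = g - s ∧ g - r = s
              then ((g-s).factorial : ℝ) * (s.factorial : ℝ) else 0) := by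
  have h1 : C a * omB g r = C (a * ((-1:ℝ)^r * (g.choose r : ℝ))) * X 0^(g-r) * X 1^r := by
    rw [omB, ← mul_assoc, ← map_mul, mul_assoc]
  have h2 : C b * omB g s = C (b * ((-1:ℝ)^s * (g.choose s : ℝ))) * X 0^(g-s) * X 1^s := by
    rw [omB, ← mul_assoc, ← map_mul, mul_assoc]
  rw [h1, h2, apol_mono]

lemma apol_Pv (g : ℕ) (v w : Fin (g+1) → ℝ) :
    apol (Pv g v) (Pv g w) = (-1:ℝ)^g * (g.factorial : ℝ) * mukaiPair g v w := by
  rw [Pv, Pv, apol_sum_left]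
  rw [sum_congr rfl fun r _ => apol_sum_right (C (v r) * omB g (r:ℕ)) _ _]
  rw [sum_congr rfl fun r _ => sum_congr rfl fun s _ =>
    apol_omB g (v r) (w s) (r:ℕ) (s:ℕ) (by omega) (by omega)]
  rw [mukaiPair, Finset.mul_sum]
  refine sum_congr rfl fun r _ => ?_
  have hr' : (r : ℕ) ≤ g := by omega
  rw [Finset.sum_eq_single_of_mem (Fin.rev r) (mem_univ _) ?side]
  case side =>
    intro s _ hne
    rw [if_neg, mul_zero]
    rintro ⟨he1, he2⟩
    exact hne (Fin.ext (by rw [Fin.val_rev]; omega))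
  have hrev : ((Fin.rev r : Fin (g+1)) : ℕ) = g - (r : ℕ) := by
    rw [Fin.val_rev]; omega
  rw [hrev, if_pos ⟨by omega, rfl⟩]
  rw [show g - (g - (r:ℕ)) = (r:ℕ) from by omega]
  have hsym : (g.choose (g - (r:ℕ)) : ℝ) = (g.choose (r:ℕ) : ℝ) := by
    exact_mod_cast congrArg (Nat.cast (R := ℝ)) (Nat.choose_symm hr')
  rw [hsym]
  have hfac2 : (g.choose (r:ℕ) : ℝ) * ((r:ℕ).factorial : ℝ) * ((g-(r:ℕ)).factorial : ℝ)
      = (g.factorial : ℝ) := by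
    exact_mod_cast congrArg (Nat.cast (R := ℝ)) (Nat.choose_mul_factorial_mul_factorial hr')
  have hsign : (-1:ℝ)^(g-(r:ℕ)) * (-1:ℝ)^(r:ℕ) = (-1:ℝ)^g := by
    rw [← pow_add, show g - (r:ℕ) + (r:ℕ) = g from by omega]
  linear_combination (v r * w (Fin.rev r) * (g.choose (r:ℕ) : ℝ) * (-1:ℝ)^(r:ℕ)
      * (-1:ℝ)^(r:ℕ) * (-1:ℝ)^(g-(r:ℕ))) * hfac2
    + ((-1:ℝ)^(r:ℕ) * (g.factorial : ℝ) * (g.choose (r:ℕ) : ℝ) * v r * w (Fin.rev r)) * hsign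

lemma sgm_Pv (g : ℕ) (x y z w : ℝ) (v : Fin (g+1) → ℝ) :
    sgm x y z w (Pv g v) = Pv g ((Amat g x y z w).mulVec v) := by
  rw [Pv, map_sum]
  have hterm : ∀ r : Fin (g+1), sgm x y z w (C (v r) * omB g (r:ℕ))
      = ∑ i : Fin (g+1), C (v r) * (C (aEnt ℝ g x y z w (i:ℕ) (r:ℕ) * (-1:ℝ)^(i:ℕ)
          * (g.choose (i:ℕ) : ℝ)) * (X 0^(g-(i:ℕ)) * X 1^(i:ℕ))) := by
    intro r
    have h1 : ∀ p q : RR, sgm x y z w (p * q) = sgm x y z w p * sgm x y z w q :=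
      fun p q => map_mul _ p q
    have hpow : ∀ (p : RR) (n : ℕ), sgm x y z w (p ^ n) = (sgm x y z w p) ^ n :=
      fun p n => map_pow _ p n
    have hmap : sgm x y z w (C (v r) * omB g (r:ℕ))
        = C (v r) * ((C ((-1:ℝ)^(r:ℕ) * (g.choose (r:ℕ) : ℝ)) : RR)
            * ((C x * X 0 + C z * X 1)^(g-(r:ℕ)) * (C y * X 0 + C w * X 1)^(r:ℕ))) := by
      rw [omB, h1, h1, h1, sgm_C, sgm_C, hpow, hpow, sgm_X0, sgm_X1]
    rw [hmap]
    rw [show (C ((-1:ℝ)^(r:ℕ) * (g.choose (r:ℕ) : ℝ)) : RR)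
          * ((C x * X 0 + C z * X 1)^(g-(r:ℕ)) * (C y * X 0 + C w * X 1)^(r:ℕ))
        = (C ((-1:ℝ)^(r:ℕ) * (g.choose (r:ℕ) : ℝ)) : RR)
          * (C x * X 0 + C z * X 1)^(g-(r:ℕ)) * (C y * X 0 + C w * X 1)^(r:ℕ)
      from by ring]
    rw [col g (r:ℕ) (by omega) x y z w]
    rw [← Fin.sum_univ_eq_sum_range (fun i => C (aEnt ℝ g x y z w i (r:ℕ) * (-1:ℝ)^i
        * (g.choose i : ℝ)) * (X 0^(g-i) * X 1^i)) (g+1)]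
    rw [Finset.mul_sum]
  rw [sum_congr rfl fun r _ => hterm r]
  rw [Finset.sum_comm]
  rw [Pv]
  refine sum_congr rfl fun i _ => ?_
  have hmv : (Amat g x y z w).mulVec v i = ∑ r : Fin (g+1), aEnt ℝ g x y z w (i:ℕ) (r:ℕ) * v r := by
    simp [Matrix.mulVec, dotProduct, Amat]
  rw [hmv, omB]
  rw [show (C (∑ r : Fin (g+1), aEnt ℝ g x y z w (i:ℕ) (r:ℕ) * v r) : RR)
      = ∑ r : Fin (g+1), C (aEnt ℝ g x y z w (i:ℕ) (r:ℕ) * v r) from map_sum _ _ _]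
  rw [Finset.sum_mul]
  refine sum_congr rfl fun r _ => ?_
  simp only [map_mul]
  ring

end FMT4

end FMT

/-- For `g ≥ 2` and real `x, y, z, w` with `xw - yz = 1`, the matrix
`A = (a^{(g)}_{m,n}(x,y,z,w))` is an isometry of the Mukai pairing:
`⟨A v, A w⟩ = ⟨v, w⟩` for all `v, w ∈ ℝ^{g+1}`. -/
theorem cohomological_FMT_isometry (g : ℕ) (hg : 2 ≤ g)
    (x y z w : ℝ) (hdet : x * w - y * z = 1) (v w' : Fin (g + 1) → ℝ) :
    mukaiPair g ((Amat g x y z w).mulVec v) ((Amat g x y z w).mulVec w')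
      = mukaiPair g v w' := by
  have hfac : ((-1:ℝ)^g * (g.factorial : ℝ)) ≠ 0 :=
    mul_ne_zero (pow_ne_zero _ (by norm_num))
      (Nat.cast_ne_zero.2 g.factorial_ne_zero)
  refine mul_left_cancel₀ hfac ?_
  calc (-1:ℝ)^g * (g.factorial : ℝ) * mukaiPair g ((Amat g x y z w).mulVec v)
        ((Amat g x y z w).mulVec w')
      = apol (Pv g ((Amat g x y z w).mulVec v)) (Pv g ((Amat g x y z w).mulVec w')) :=
        (apol_Pv g _ _).symm
    _ = apol (sgm x y z w (Pv g v)) (sgm x y z w (Pv g w')) := by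
        rw [sgm_Pv, sgm_Pv]
    _ = apol (Pv g v) (Pv g w') := apol_sgm hdet _ _
    _ = (-1:ℝ)^g * (g.factorial : ℝ) * mukaiPair g v w' := apol_Pv g v w'
end

section
/- Let g ≥ 2 be an integer, let x, y, z, w be real numbers with xw − yz = 1, and let u ∈ ℂ with Im u ≠ 0 (so that x − yu ≠ 0). For u' ∈ ℂ define Z_{u'} : ℂ^{g+1} → ℂ by Z_{u'}(a) = − Σ_{i=0}^{g} (g choose i) (−u')^{g−i} a_i. Let A be the complexification of the matrix (a^{(g)}_{m,n}(x,y,z,w)); then A is invertible, and for v = (−z + wu)/(x − yu) one has, for every a ∈ ℂ^{g+1}: Z_u(A^{−1} a) = (x − yu)^g · Z_v(a). (This expresses that the Fourier–Mukai transform acts on the central charge Z_{uℓ} by Φ_E · Z_{uℓ} = (x − yu)^g Z_{vℓ}.) -/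
open Polynomial Finset


/-- The complexified `(g+1) × (g+1)` matrix `A(x,y,z,w) = (a^{(g)}_{m,n}(x,y,z,w))`. -/
noncomputable def AmatC (g : ℕ) (x y z w : ℝ) : Matrix (Fin (g + 1)) (Fin (g + 1)) ℂ :=
  Matrix.of fun m n => aEnt ℂ g (x : ℂ) (y : ℂ) (z : ℂ) (w : ℂ) (m : ℕ) (n : ℕ)

/-- The central charge in rank-one coordinates:
`Z_{u'}(a) = - Σ_{i=0}^{g} (g choose i) (-u')^{g-i} a_i`. -/
noncomputable def Zch (g : ℕ) (u : ℂ) (a : Fin (g + 1) → ℂ) : ℂ :=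
  -∑ i : Fin (g + 1), (g.choose (i : ℕ) : ℂ) * (-u) ^ (g - (i : ℕ)) * a i


lemma coeff_binomC (a b : ℂ) (k j : ℕ) :
    ((C a + C b * X) ^ k).coeff j
      = (k.choose j : ℂ) * b ^ j * a ^ (k - j) := by
  rw [add_comm, add_pow, Polynomial.finset_sum_coeff]
  have hterm : ∀ l, ((C b * X) ^ l * C a ^ (k - l) * (k.choose l : ℂ[X])).coeff j
      = if j = l then (k.choose l : ℂ) * b ^ l * a ^ (k - l) else 0 := by
    intro l
    have h : (C b * X) ^ l * C a ^ (k - l) * (k.choose l : ℂ[X])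
        = C ((k.choose l : ℂ) * b ^ l * a ^ (k - l)) * X ^ l := by
      simp only [mul_pow, C_mul, C_pow, C_eq_natCast]
      ring
    rw [h, coeff_C_mul, coeff_X_pow]
    by_cases hj : j = l <;> simp [hj]
  rw [Finset.sum_congr rfl fun l _ => hterm l, Finset.sum_ite_eq]
  by_cases hj : j ∈ range (k + 1)
  · simp [hj]
  · have : k < j := by simpa [Nat.lt_succ_iff, not_le] using hj
    simp [hj, Nat.choose_eq_zero_of_lt this]

lemma aEnt_eq (x y z w : ℂ) (g n m : ℕ) (hm : m ≤ g) :
    aEnt ℂ g x y z w n m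
      = (-1 : ℂ) ^ (n + m) *
        ((C x + C y * X) ^ (g - n) * (C z + C w * X) ^ n).coeff m := by
  rw [Polynomial.coeff_mul, Finset.Nat.sum_antidiagonal_eq_sum_range_succ_mk]
  unfold aEnt
  congr 1
  rw [← Finset.sum_filter]
  have hset : (Finset.range (g + 1)).filter (fun l => l ≤ m) = Finset.range (m + 1) := by
    ext l; simp only [Finset.mem_filter, Finset.mem_range, Nat.lt_succ_iff]; omega
  rw [hset]
  refine Finset.sum_congr rfl fun l hl => ?_
  rw [coeff_binomC, coeff_binomC]
  by_cases h1 : m - l ≤ n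
  · have h2 : n + l - m = n - (m - l) := by
      simp only [Finset.mem_range, Nat.lt_succ_iff] at hl; omega
    rw [h2]; ring
  · rw [show n.choose (m - l) = 0 from Nat.choose_eq_zero_of_lt (by omega)]
    simp

lemma key (g : ℕ) (x y z w : ℂ) (hdet : x * w - y * z = 1) (u : ℂ) (m : ℕ) (hm : m ≤ g) :
    ∑ n ∈ Finset.range (g + 1),
      (g.choose n : ℂ) * (z - w * u) ^ (g - n) * (x - y * u) ^ n * aEnt ℂ g x y z w n m
      = (g.choose m : ℂ) * (-u) ^ (g - m) := by
  set Q : ℂ[X] := C (y * u - x) * (C z + C w * X) with hQ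
  set P : ℂ[X] := C (z - w * u) * (C x + C y * X) with hP
  have h1 : ∀ n ∈ Finset.range (g + 1),
      (g.choose n : ℂ) * (z - w * u) ^ (g - n) * (x - y * u) ^ n * aEnt ℂ g x y z w n m
        = (-1 : ℂ) ^ m * (Q ^ n * P ^ (g - n) * (g.choose n : ℂ[X])).coeff m := by
    intro n hn
    have hfac : Q ^ n * P ^ (g - n) * (g.choose n : ℂ[X])
        = C ((y * u - x) ^ n * (z - w * u) ^ (g - n) * (g.choose n : ℂ))
            * ((C x + C y * X) ^ (g - n) * (C z + C w * X) ^ n) := by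
      rw [hQ, hP]
      simp only [mul_pow, C_mul, C_pow, C_eq_natCast]
      ring
    have hyx : (y * u - x) ^ n = (-1 : ℂ) ^ n * (x - y * u) ^ n := by
      rw [show (y * u - x) = -(x - y * u) from by ring, neg_pow]
    rw [hfac, coeff_C_mul, aEnt_eq x y z w g n m hm, hyx, pow_add]
    ring
  rw [Finset.sum_congr rfl h1, ← Finset.mul_sum, ← Polynomial.finset_sum_coeff, ← add_pow]
  have hQP : Q + P = C (-u) + C (-1) * X := by
    have e1 : (y * u - x) * z + (z - w * u) * x = -u := by linear_combination (-u) * hdet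
    have e2 : (y * u - x) * w + (z - w * u) * y = -1 := by linear_combination -hdet
    have expand : Q + P = C ((y * u - x) * z + (z - w * u) * x)
        + C ((y * u - x) * w + (z - w * u) * y) * X := by
      rw [hQ, hP]; simp only [C_add, C_mul]; ring
    rw [expand, e1, e2]
  have hneg : Q + P = -(X + C u) := by
    rw [hQP]; simp only [C_neg, C_1]; ring
  rw [hneg, neg_pow (X + C u), show ((-1 : ℂ[X]) ^ g) = C ((-1 : ℂ) ^ g) from by simp,
    coeff_C_mul, coeff_X_add_C_pow, neg_pow u]
  have hs : (-1 : ℂ) ^ (g - m) * (-1 : ℂ) ^ m = (-1 : ℂ) ^ g := by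
    rw [← pow_add]; congr 1; omega
  rw [← hs]; ring_nf
  rw [pow_mul', neg_one_sq, one_pow]
  ring

lemma keyFin (g : ℕ) (x y z w : ℝ) (hdet : x * w - y * z = 1) (u : ℂ) (m : Fin (g + 1)) :
    ∑ n : Fin (g + 1),
        ((g.choose (n : ℕ) : ℂ) * ((z : ℂ) - w * u) ^ (g - (n : ℕ)) *
          ((x : ℂ) - y * u) ^ (n : ℕ)) * AmatC g x y z w n m
      = (g.choose (m : ℕ) : ℂ) * (-u) ^ (g - (m : ℕ)) := by
  have hd : (x : ℂ) * w - (y : ℂ) * z = 1 := by exact_mod_cast hdet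
  have hm : (m : ℕ) ≤ g := Nat.lt_succ_iff.mp m.isLt
  have := key g (x : ℂ) (y : ℂ) (z : ℂ) (w : ℂ) hd u (m : ℕ) hm
  rw [← this, ← Fin.sum_univ_eq_sum_range (fun n =>
    (g.choose n : ℂ) * ((z : ℂ) - w * u) ^ (g - n) * ((x : ℂ) - y * u) ^ n *
      aEnt ℂ g (x : ℂ) (y : ℂ) (z : ℂ) (w : ℂ) n (m : ℕ)) (g + 1)]
  exact Finset.sum_congr rfl fun n _ => by rw [AmatC, Matrix.of_apply]

lemma swap_sum (g : ℕ) (A : Matrix (Fin (g + 1)) (Fin (g + 1)) ℂ)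
    (Lv b : Fin (g + 1) → ℂ) :
    ∑ m : Fin (g + 1), (∑ n : Fin (g + 1), Lv n * A n m) * b m
      = ∑ n : Fin (g + 1), Lv n * (A.mulVec b n) := by
  simp only [Finset.sum_mul, Finset.mul_sum, Matrix.mulVec, dotProduct]
  rw [Finset.sum_comm]
  exact Finset.sum_congr rfl fun n _ => Finset.sum_congr rfl fun m _ => by ring

lemma det_ne (g : ℕ) (x y z w : ℝ) (hdet : x * w - y * z = 1) :
    (AmatC g x y z w).det ≠ 0 := by
  intro h0
  obtain ⟨v, hv, hAv⟩ := Matrix.exists_mulVec_eq_zero_iff.mpr h0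
  apply hv
  have hz : ∀ u' : ℂ,
      ∑ m : Fin (g + 1), (g.choose (m : ℕ) : ℂ) * (-u') ^ (g - (m : ℕ)) * v m = 0 := by
    intro u'
    have h1 : ∑ m : Fin (g + 1), (g.choose (m : ℕ) : ℂ) * (-u') ^ (g - (m : ℕ)) * v m
        = ∑ m : Fin (g + 1),
            (∑ n : Fin (g + 1), ((g.choose (n : ℕ) : ℂ) * ((z : ℂ) - w * u') ^ (g - (n : ℕ)) *
              ((x : ℂ) - y * u') ^ (n : ℕ)) * AmatC g x y z w n m) * v m := by
      refine Finset.sum_congr rfl fun m _ => ?_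
      rw [keyFin g x y z w hdet u' m]
    rw [h1, swap_sum, hAv]
    simp
  set q : Polynomial ℂ := ∑ m : Fin (g + 1),
      Polynomial.C ((g.choose (m : ℕ) : ℂ) * v m) * (-Polynomial.X) ^ (g - (m : ℕ)) with hqdef
  have hq0 : q = 0 := by
    apply Polynomial.funext
    intro r
    rw [hqdef]
    simp only [Polynomial.eval_finset_sum, Polynomial.eval_mul, Polynomial.eval_pow,
      Polynomial.eval_neg, Polynomial.eval_X, Polynomial.eval_C, Polynomial.eval_zero]
    rw [show ∑ m : Fin (g + 1), (g.choose (m : ℕ) : ℂ) * v m * (-r) ^ (g - (m : ℕ))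
        = ∑ m : Fin (g + 1), (g.choose (m : ℕ) : ℂ) * (-r) ^ (g - (m : ℕ)) * v m from
      Finset.sum_congr rfl fun m _ => by ring]
    exact hz r
  funext m0
  have hm0 : (m0 : ℕ) ≤ g := Nat.lt_succ_iff.mp m0.isLt
  have hc := congrArg (fun p => Polynomial.coeff p (g - (m0 : ℕ))) hq0
  simp only [hqdef, Polynomial.finset_sum_coeff, Polynomial.coeff_zero] at hc
  have hterm : ∀ m : Fin (g + 1),
      (Polynomial.C ((g.choose (m : ℕ) : ℂ) * v m) * (-Polynomial.X) ^ (g - (m : ℕ))).coeff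
          (g - (m0 : ℕ))
        = if g - (m0 : ℕ) = g - (m : ℕ)
            then (g.choose (m : ℕ) : ℂ) * v m * (-1) ^ (g - (m : ℕ)) else 0 := by
    intro m
    rw [show ((-Polynomial.X : Polynomial ℂ) ^ (g - (m : ℕ)))
        = Polynomial.C ((-1 : ℂ) ^ (g - (m : ℕ))) * Polynomial.X ^ (g - (m : ℕ)) from by
      rw [neg_pow]; simp,
      ← mul_assoc, ← Polynomial.C_mul, Polynomial.coeff_C_mul, Polynomial.coeff_X_pow]
    by_cases h : g - (m0 : ℕ) = g - (m : ℕ) <;> simp [h]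
  rw [Finset.sum_congr rfl fun m _ => hterm m, Finset.sum_eq_single m0] at hc
  · simp only [if_pos rfl] at hc
    rcases mul_eq_zero.mp hc with h | h
    · rcases mul_eq_zero.mp h with h' | h'
      · exact absurd h' (Nat.cast_ne_zero.mpr (Nat.choose_pos hm0).ne')
      · exact h'
    · exact absurd h (pow_ne_zero _ (neg_ne_zero.mpr one_ne_zero))
  · intro m _ hne
    rw [if_neg]
    intro hcontra
    exact hne (Fin.ext (by omega : (m : ℕ) = (m0 : ℕ)))
  · intro h; exact absurd (Finset.mem_univ m0) h

/-- For `g ≥ 2`, real `x, y, z, w` with `xw - yz = 1` and `u ∈ ℂ` with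
`Im u ≠ 0`, the complexified matrix `A` is invertible and, with
`v = (-z + wu)/(x - yu)`, for every `a ∈ ℂ^{g+1}`:
`Z_u(A⁻¹ a) = (x - yu)^g Z_v(a)`, i.e. `Φ_E · Z_{uℓ} = (x - yu)^g Z_{vℓ}`. -/
theorem FMT_action_on_central_charge (g : ℕ) (hg : 2 ≤ g)
    (x y z w : ℝ) (hdet : x * w - y * z = 1) (u : ℂ) (hu : u.im ≠ 0) :
    IsUnit (AmatC g x y z w) ∧
    ∀ a : Fin (g + 1) → ℂ,
      Zch g u ((AmatC g x y z w)⁻¹.mulVec a)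
        = ((x : ℂ) - (y : ℂ) * u) ^ g *
            Zch g ((-(z : ℂ) + (w : ℂ) * u) / ((x : ℂ) - (y : ℂ) * u)) a := by
  have hdet0 := det_ne g x y z w hdet
  have hAu : IsUnit (AmatC g x y z w) :=
    (Matrix.isUnit_iff_isUnit_det _).mpr (isUnit_iff_ne_zero.mpr hdet0)
  refine ⟨hAu, fun a => ?_⟩
  have hne : (x : ℂ) - y * u ≠ 0 := by
    intro h0
    have him := congrArg Complex.im h0
    simp only [Complex.sub_im, Complex.mul_im, Complex.ofReal_im, Complex.ofReal_re,
      Complex.zero_im, zero_sub, zero_mul, add_zero, neg_eq_zero, mul_zero] at him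
    rcases mul_eq_zero.mp him with hy | him2
    · have hy0 : y = 0 := by exact_mod_cast hy
      rw [hy0] at h0
      have hx0 : x = 0 := by
        have : (x : ℂ) = 0 := by simpa using h0
        exact_mod_cast this
      rw [hx0, hy0] at hdet
      norm_num at hdet
    · exact hu him2
  set b := (AmatC g x y z w)⁻¹.mulVec a with hb
  have hAb : (AmatC g x y z w).mulVec b = a := by
    rw [hb, Matrix.mulVec_mulVec,
      Matrix.mul_nonsing_inv _ (isUnit_iff_ne_zero.mpr hdet0), Matrix.one_mulVec]
  have hL : Zch g u b
      = -∑ n : Fin (g + 1), ((g.choose (n : ℕ) : ℂ) * ((z : ℂ) - w * u) ^ (g - (n : ℕ)) *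
          ((x : ℂ) - y * u) ^ (n : ℕ)) * a n := by
    simp only [Zch]
    congr 1
    calc ∑ m : Fin (g + 1), (g.choose (m : ℕ) : ℂ) * (-u) ^ (g - (m : ℕ)) * b m
        = ∑ m : Fin (g + 1),
            (∑ n : Fin (g + 1), ((g.choose (n : ℕ) : ℂ) * ((z : ℂ) - w * u) ^ (g - (n : ℕ)) *
              ((x : ℂ) - y * u) ^ (n : ℕ)) * AmatC g x y z w n m) * b m :=
          Finset.sum_congr rfl fun m _ => by rw [keyFin g x y z w hdet u m]
      _ = ∑ n : Fin (g + 1), ((g.choose (n : ℕ) : ℂ) * ((z : ℂ) - w * u) ^ (g - (n : ℕ)) *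
            ((x : ℂ) - y * u) ^ (n : ℕ)) * ((AmatC g x y z w).mulVec b n) :=
          swap_sum g _ _ _
      _ = _ := by rw [hAb]
  rw [hL]
  simp only [Zch, mul_neg, neg_inj, Finset.mul_sum]
  refine Finset.sum_congr rfl fun n _ => ?_
  have hn : (n : ℕ) ≤ g := Nat.lt_succ_iff.mp n.isLt
  have hnegv : -((-(z : ℂ) + w * u) / ((x : ℂ) - y * u))
      = ((z : ℂ) - w * u) / ((x : ℂ) - y * u) := by ring
  have hdg : ((x : ℂ) - y * u) ^ g
      = ((x : ℂ) - y * u) ^ (g - (n : ℕ)) * ((x : ℂ) - y * u) ^ (n : ℕ) := by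
    rw [← pow_add]; congr 1; omega
  rw [hnegv, div_pow, hdg]
  have hne' : ((x : ℂ) - y * u) ^ (g - (n : ℕ)) ≠ 0 := pow_ne_zero _ hne
  have hinv := mul_inv_cancel₀ hne'
  rw [div_eq_mul_inv]
  linear_combination (-((g.choose (n : ℕ) : ℂ) * ((z : ℂ) - w * u) ^ (g - (n : ℕ)) * a n * ((x : ℂ) - y * u) ^ (n : ℕ))) * hinv
end

section
/- Let λ > 0 be rational and let x, y, z, w be integers with xw − yz = 1 and y < 0. Set b = x/y + λ/2, m = (√3 λ)/2, b' = −w/y − 1/(2λy²), m' = √3/(2λy²). For a vector a = (a₀, a₁, a₂, a₃) ∈ ℝ⁴ define the Fourier–Mukai transformed vector F(a) = (−y³ a₃, y a₂, −a₁/y, a₀/y³) (so that ch^{−w/y}(Υ(E)) = F(ch^{x/y}(E)) by Theorem 2.4), and for d = (d₀, d₁, d₂, d₃) ∈ ℝ⁴ define G(d) = (y³ d₃, −y d₂, d₁/y, −d₀/y³) (so that ch^{x/y}(Υ̂[1](E)) = G(ch^{−w/y}(E))). Define I(a) = (3√3 λ/2)(a₂ − λ a₁) (= Im Z_{mℓ,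 bℓ} in ch^{x/y}-coordinates) and I'(d) = (3√3/(2λy²))(d₂ + d₁/(λ y²)) (= Im Z_{m'ℓ, b'ℓ} in ch^{−w/y}-coordinates). Then for all a, d ∈ ℝ⁴: I'(F(a)) = −(1/|λ y|³) · I(a) and I(G(d)) = −|λ y|³ · I'(d). -/
/-- The action of the Fourier-Mukai transform `Υ` on twisted Chern character
coordinates: `ch^{-w/y}(Υ(E)) = F(ch^{x/y}(E))` where
`F(a₀,a₁,a₂,a₃) = (-y³a₃, y a₂, -a₁/y, a₀/y³)`. -/
noncomputable def Fvec (y : ℝ) (a : Fin 4 → ℝ) : Fin 4 → ℝ :=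
  ![-y ^ 3 * a 3, y * a 2, -a 1 / y, a 0 / y ^ 3]

/-- The action of the shifted quasi-inverse `Υ̂[1]` on twisted Chern character
coordinates: `ch^{x/y}(Υ̂[1](E)) = G(ch^{-w/y}(E))` where
`G(d₀,d₁,d₂,d₃) = (y³d₃, -y d₂, d₁/y, -d₀/y³)`. -/
noncomputable def Gvec (y : ℝ) (d : Fin 4 → ℝ) : Fin 4 → ℝ :=
  ![y ^ 3 * d 3, -y * d 2, d 1 / y, -d 0 / y ^ 3]

/-- `Im Z_{mℓ, bℓ}` in `ch^{x/y}`-coordinates, with `b = x/y + λ/2`, `m = √3λ/2`: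
`I(a) = (3√3λ/2)(a₂ - λa₁)`. -/
noncomputable def Ifun (lam : ℝ) (a : Fin 4 → ℝ) : ℝ :=
  (3 * Real.sqrt 3 * lam / 2) * (a 2 - lam * a 1)

/-- `Im Z_{m'ℓ, b'ℓ}` in `ch^{-w/y}`-coordinates, with `b' = -w/y - 1/(2λy²)`,
`m' = √3/(2λy²)`: `I'(d) = (3√3/(2λy²))(d₂ + d₁/(λy²))`. -/
noncomputable def Ifun' (lam y : ℝ) (d : Fin 4 → ℝ) : ℝ :=
  (3 * Real.sqrt 3 / (2 * lam * y ^ 2)) * (d 2 + d 1 / (lam * y ^ 2))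

/-- Proposition 4.4: for `λ ∈ ℚ_{>0}` and integers `x, y, z, w` with
`xw - yz = 1` and `y < 0`, for all `a, d ∈ ℝ⁴`:
`Im Z_{m'ℓ, b'ℓ}(Υ(E)) = -(1/|λy|³) Im Z_{mℓ, bℓ}(E)` and
`Im Z_{mℓ, bℓ}(Υ̂[1](E)) = -|λy|³ Im Z_{m'ℓ, b'ℓ}(E)`. -/
theorem FMT_imaginary_part_relation (lam : ℚ) (hlam : 0 < lam)
    (x y z w : ℤ) (hdet : x * w - y * z = 1) (hy : y < 0) :
    (∀ a : Fin 4 → ℝ,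
      Ifun' (lam : ℝ) (y : ℝ) (Fvec (y : ℝ) a)
        = -(1 / |(lam : ℝ) * (y : ℝ)| ^ 3) * Ifun (lam : ℝ) a) ∧
    (∀ d : Fin 4 → ℝ,
      Ifun (lam : ℝ) (Gvec (y : ℝ) d)
        = -(|(lam : ℝ) * (y : ℝ)| ^ 3) * Ifun' (lam : ℝ) (y : ℝ) d) := by
  have hlamR : (0:ℝ) < (lam:ℝ) := by exact_mod_cast hlam
  have hyR : ((y:ℝ)) < 0 := by exact_mod_cast hy
  have hyne : ((y:ℝ)) ≠ 0 := ne_of_lt hyR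
  have habs : |(lam : ℝ) * (y : ℝ)| = (lam:ℝ) * (-(y:ℝ)) := by
    rw [abs_of_nonpos (by nlinarith)]; ring
  constructor
  · intro a
    simp only [Ifun, Ifun', Fvec, habs, Matrix.cons_val_zero, Matrix.cons_val_one,
      Matrix.head_cons, Matrix.cons_val_two, Matrix.tail_cons, Matrix.cons_val_three]
    field_simp
    ring
  · intro d
    simp only [Ifun, Ifun', Gvec, habs, Matrix.cons_val_zero, Matrix.cons_val_one,
      Matrix.head_cons, Matrix.cons_val_two, Matrix.tail_cons, Matrix.cons_val_three]
    field_simp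
    ring
end
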